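/- The map 𝓕 is monotonically non-increasing with respect to the elementwise order on ℝ^n and the Loewner order on symmetric m×m matrices: for all σ^{(1)}, σ^{(2)} ∈ ℝ^n_+ with σ^{(1)} ≤ σ^{(2)} (elementwise), the matrix 𝓕(σ^{(1)}) − 𝓕(σ^{(2)}) is positive semidefinite. -/

import Mathlib

open scoped BigOperators

/-- The map `𝓕` is monotonically non-increasing with respect to
the elementwise order on `ℝ^n` and the Loewner order on symmetric `m×m`
matrices: for all `σ⁽¹⁾, σ⁽²⁾ ∈ ℝ^n_+` with `σ⁽¹⁾ ≤ σ⁽²⁾` (elementwise), the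
matrix `𝓕(σ⁽¹⁾) − 𝓕(σ⁽²⁾)` is positive semidefinite. -/
theorem stmt_11
    {H : Type*} [NormedAddCommGroup H] [InnerProductSpace ℝ H] [CompleteSpace H]
    {n m : ℕ}
    (b0 : H →L[ℝ] H →L[ℝ] ℝ) (b : Fin n → H →L[ℝ] H →L[ℝ] ℝ)
    (hb0symm : ∀ u v : H, b0 u v = b0 v u)
    (hb0pos : ∀ v : H, 0 ≤ b0 v v)
    (hbsymm : ∀ i, ∀ u v : H, b i u v = b i v u)
    (hbpos : ∀ i, ∀ v : H, 0 ≤ b i v v)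
    (C β : ℝ) (hβ : 0 < β) (hCβ : β ≤ C)
    (hcoer : ∀ v : H, β * ‖v‖ ^ 2 ≤ b0 v v + ∑ i, b i v v)
    (hbound : ∀ v : H, b0 v v + ∑ i, b i v v ≤ C * ‖v‖ ^ 2)
    (u : (Fin n → ℝ) → (H →L[ℝ] ℝ) → H)
    (hu : ∀ σ : Fin n → ℝ, (∀ i, 0 < σ i) → ∀ l : H →L[ℝ] ℝ,
      ∀ v : H, b0 (u σ l) v + ∑ i, σ i * b i (u σ l) v = l v)
    (l : Fin m → (H →L[ℝ] ℝ)) :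
    ∀ σ₁ σ₂ : Fin n → ℝ, (∀ i, 0 < σ₁ i) → (∀ i, 0 < σ₂ i) →
      (∀ i, σ₁ i ≤ σ₂ i) →
      Matrix.PosSemidef
        (Matrix.of fun j k : Fin m => l k (u σ₁ (l j)) - l k (u σ₂ (l j))) := by
  intro σ₁ σ₂ hσ₁ hσ₂ hle
  set B : (Fin n → ℝ) → H → H → ℝ := fun σ x y => b0 x y + ∑ i, σ i * b i x y with hBdef
  have hBsymm : ∀ σ x y, B σ x y = B σ y x := by
    intro σ x y
    simp only [hBdef, hb0symm x y]
    congr 1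
    exact Finset.sum_congr rfl fun i _ => by rw [hbsymm i x y]
  -- entries of the matrix via the bilinear form
  have hFentry : ∀ (σ : Fin n → ℝ), (∀ i, 0 < σ i) → ∀ j k,
      l k (u σ (l j)) = l j (u σ (l k)) := by
    intro σ hσ j k
    have h1 := hu σ hσ (l k) (u σ (l j))
    have h2 := hu σ hσ (l j) (u σ (l k))
    rw [← h1, ← h2]
    exact hBsymm σ (u σ (l k)) (u σ (l j))
  -- linearity of B in the first argument over finite sums of scalar multiples
  have hBsum : ∀ (σ : Fin n → ℝ) (c : Fin m → ℝ) (x : Fin m → H) (v : H),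
      B σ (∑ j, c j • x j) v = ∑ j, c j * B σ (x j) v := by
    intro σ c x v
    simp only [hBdef, map_sum, map_smul, ContinuousLinearMap.coe_sum',
      Finset.sum_apply, ContinuousLinearMap.coe_smul', Pi.smul_apply, smul_eq_mul,
      Finset.mul_sum, Finset.sum_add_distrib, mul_add]
    congr 1
    rw [Finset.sum_comm]
    exact Finset.sum_congr rfl fun j _ => Finset.sum_congr rfl fun i _ => by ring
  -- expansion of B on a difference
  have hBsub : ∀ (σ : Fin n → ℝ) (x y : H),
      B σ (x - y) (x - y) = B σ x x - B σ x y - B σ y x + B σ y y := by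
    intro σ x y
    simp only [hBdef, map_sub, ContinuousLinearMap.sub_apply, mul_sub,
      Finset.sum_sub_distrib]
    ring
  -- nonnegativity of B on the diagonal for nonnegative coefficients
  have hBpos : ∀ (σ : Fin n → ℝ), (∀ i, 0 ≤ σ i) → ∀ v, 0 ≤ B σ v v := by
    intro σ hσ v
    have : 0 ≤ ∑ i, σ i * b i v v :=
      Finset.sum_nonneg fun i _ => mul_nonneg (hσ i) (hbpos i v)
    simpa [hBdef] using add_nonneg (hb0pos v) this
  refine Matrix.PosSemidef.of_dotProduct_mulVec_nonneg ?_ ?_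
  · -- Hermitian (symmetric)
    ext j k
    simp only [Matrix.conjTranspose_apply, Matrix.of_apply, star_trivial]
    rw [hFentry σ₁ hσ₁ k j, hFentry σ₂ hσ₂ k j]
  · intro g
    set w₁ : H := ∑ j, g j • u σ₁ (l j) with hw₁
    set w₂ : H := ∑ j, g j • u σ₂ (l j) with hw₂
    set L : H → ℝ := fun v => ∑ j, g j * l j v with hL
    have hLlin : ∀ (c : Fin m → ℝ) (x : Fin m → H),
        L (∑ j, c j • x j) = ∑ j, c j * L (x j) := by
      intro c x
      simp only [hL, map_sum, map_smul, smul_eq_mul, Finset.mul_sum]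
      rw [Finset.sum_comm]
      exact Finset.sum_congr rfl fun j _ => Finset.sum_congr rfl fun k _ => by ring
    have h1 : ∀ v, B σ₁ w₁ v = L v := by
      intro v
      rw [hw₁, hBsum]
      exact Finset.sum_congr rfl fun j _ =>
        congrArg (fun t => g j * t) (hu σ₁ hσ₁ (l j) v)
    have h2 : ∀ v, B σ₂ w₂ v = L v := by
      intro v
      rw [hw₂, hBsum]
      exact Finset.sum_congr rfl fun j _ =>
        congrArg (fun t => g j * t) (hu σ₂ hσ₂ (l j) v)
    -- the quadratic form equals L w₁ - L w₂
    have hform : dotProduct (star g)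
        (Matrix.mulVec (Matrix.of fun j k : Fin m =>
          l k (u σ₁ (l j)) - l k (u σ₂ (l j))) g)
        = L w₁ - L w₂ := by
      rw [hw₁, hw₂, hLlin, hLlin]
      simp only [dotProduct, Matrix.mulVec, Matrix.of_apply, star_trivial,
        dotProduct, hL, Finset.mul_sum, ← Finset.sum_sub_distrib]
      refine Finset.sum_congr rfl fun j _ => Finset.sum_congr rfl fun k _ => ?_
      rw [hFentry σ₁ hσ₁ j k, hFentry σ₂ hσ₂ j k]
      ring
    rw [show (dotProduct (star g) (Matrix.mulVec (Matrix.of fun j k : Fin m =>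
      l k (u σ₁ (l j)) - l k (u σ₂ (l j))) g)) = L w₁ - L w₂ from hform]
    -- key algebraic identity
    have hB2w2 : B σ₂ w₂ w₂ = B σ₁ w₂ w₂ + ∑ i, (σ₂ i - σ₁ i) * b i w₂ w₂ := by
      simp only [hBdef, sub_mul, Finset.sum_sub_distrib]
      ring
    have hkey : L w₁ - L w₂ =
        B σ₁ (w₁ - w₂) (w₁ - w₂) + ∑ i, (σ₂ i - σ₁ i) * b i w₂ w₂ := by
      have e1 : B σ₁ w₁ w₁ = L w₁ := h1 w₁
      have e2 : B σ₁ w₁ w₂ = L w₂ := h1 w₂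
      have e3 : B σ₁ w₂ w₁ = L w₂ := by rw [hBsymm]; exact h1 w₂
      have e4 : B σ₂ w₂ w₂ = L w₂ := h2 w₂
      have e5 : B σ₁ w₂ w₂ = L w₂ - ∑ i, (σ₂ i - σ₁ i) * b i w₂ w₂ := by
        rw [← e4, hB2w2]; ring
      rw [hBsub, e1, e2, e3, e5]; ring
    rw [hkey]
    have t1 : 0 ≤ B σ₁ (w₁ - w₂) (w₁ - w₂) :=
      hBpos σ₁ (fun i => (hσ₁ i).le) _
    have t2 : 0 ≤ ∑ i, (σ₂ i - σ₁ i) * b i w₂ w₂ :=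
      Finset.sum_nonneg fun i _ => mul_nonneg (sub_nonneg.mpr (hle i)) (hbpos i w₂)
    exact add_nonneg t1 t2
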